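/- (Proposition 2.5, first identity, coefficientwise form.) For every index k = (k1, ..., kr), we have ζ*_{x,y}(k;T) = Σ x^{k1+...+ki} · y^{k_{j+1}+...+kr} · ((x+y)T)^{j-i}/(j-i)! · Z*(k_i,...,k_1;0) · Z*(k_{j+1},...,k_r;0) in ℝ[x,y,T], where the sum is over all pairs of integers 0 ≤ i ≤ j ≤ r such that k_{i+1} = k_{i+2} = ... = k_j = 1, and Z*(m;0) denotes the value at T = 0 of the polynomial Z*(m;T). -/

import Mathlib

open scoped BigOperators

/-- The Riemann zeta value ζ(n) = Σ_{m ≥ 1} 1/mⁿ. -/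
noncomputable def rzeta (n : ℕ) : ℝ := ∑' m : ℕ+, 1 / (m : ℝ) ^ n

/-- The multiple zeta value ζ(k₁,…,k_r) = Σ_{m₁ > ⋯ > m_r ≥ 1} 1/(m₁^{k₁} ⋯ m_r^{k_r}). -/
noncomputable def mzv (k : List ℕ) : ℝ :=
  ∑' m : {m : Fin k.length → ℕ+ // StrictAnti m}, ∏ i, 1 / ((m.1 i : ℝ) ^ k.get i)

/-- An index is a finite sequence of positive integers. -/
def IsIndex (k : List ℕ) : Prop := ∀ a ∈ k, 1 ≤ a

/-- An index is admissible if it is empty or its first entry exceeds 1. -/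
def IsAdmissible (k : List ℕ) : Prop := ∀ a ∈ k.head?, 2 ≤ a

/-- Auxiliary harmonic product, on *reversed* indices (peeling the last entries). -/
noncomputable def harmAux : List ℕ → List ℕ → (List ℕ →₀ ℚ)
  | [], b => Finsupp.single b 1
  | a, [] => Finsupp.single a 1
  | ka :: as, lb :: bs =>
      Finsupp.mapDomain (lb :: ·) (harmAux (ka :: as) bs)
      + Finsupp.mapDomain (ka :: ·) (harmAux as (lb :: bs))
      + Finsupp.mapDomain ((ka + lb) :: ·) (harmAux as bs)

/-- The harmonic (stuffle) product of two indices, as an element of the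
ℚ-vector space freely spanned by indices. -/
noncomputable def harm (k l : List ℕ) : List ℕ →₀ ℚ :=
  Finsupp.mapDomain List.reverse (harmAux k.reverse l.reverse)

/-- The word 0^{k₁-1}1 ⋯ 0^{k_r-1}1 associated to an index. -/
def indexToWord (k : List ℕ) : List Bool :=
  k.flatMap fun a => List.replicate (a - 1) false ++ [true]

/-- Parse a word in letters 0, 1 back into an index. -/
def wordToIndex : List Bool → List ℕ
  | [] => []
  | true :: w => 1 :: wordToIndex w
  | false :: w =>
      match wordToIndex w with
      | [] => []
      | a :: rest => (a + 1) :: rest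

/-- The shuffle product of two words. -/
noncomputable def wordShuffle : List Bool → List Bool → (List Bool →₀ ℚ)
  | [], b => Finsupp.single b 1
  | a, [] => Finsupp.single a 1
  | x :: xs, y :: ys =>
      Finsupp.mapDomain (x :: ·) (wordShuffle xs (y :: ys))
      + Finsupp.mapDomain (y :: ·) (wordShuffle (x :: xs) ys)

/-- The shuffle product of two indices, as an element of the
ℚ-vector space freely spanned by indices. -/
noncomputable def shuf (k l : List ℕ) : List ℕ →₀ ℚ :=
  Finsupp.mapDomain wordToIndex (wordShuffle (indexToWord k) (indexToWord l))

/-- ℚ-linear extension of a map defined on indices. -/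
noncomputable def Zext (Z : List ℕ → Polynomial ℝ) (v : List ℕ →₀ ℚ) : Polynomial ℝ :=
  v.sum fun m c => c • Z m

/-- Exponential of a formal power series (with zero constant term) over a field. -/
noncomputable def pexp {R : Type*} [Field R] (f : PowerSeries R) : PowerSeries R :=
  PowerSeries.mk fun n =>
    ∑ m ∈ Finset.range (n + 1), PowerSeries.coeff (R := R) n (f ^ m) / (m.factorial : R)

/-- A(u) = exp(Σ_{n≥2} ((-1)ⁿ/n) ζ(n) uⁿ) ∈ ℝ[[u]]. -/
noncomputable def Aseries : PowerSeries ℝ :=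
  pexp (PowerSeries.mk fun n => if 2 ≤ n then (-1 : ℝ) ^ n / n * rzeta n else 0)

/-- The linear map ρ determined by ρ(Tᵐ/m!) = (coefficient of uᵐ in A(u)e^{Tu}),
i.e. ρ(Tᵐ) = m! Σ_{j≤m} A_{m-j} Tʲ/j!. -/
noncomputable def rho {R : Type*} [Field R] (A : PowerSeries R) (P : Polynomial R) :
    Polynomial R :=
  P.sum fun m a =>
    a • (m.factorial : R) •
      ∑ j ∈ Finset.range (m + 1),
        (PowerSeries.coeff (R := R) (m - j) A / (j.factorial : R)) • (Polynomial.X : Polynomial R) ^ j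

/-- ζ*_{x,y}(k;T) = Σ_{i=0}^{r} x^{k₁+⋯+kᵢ} y^{k_{i+1}+⋯+k_r}
Z*(kᵢ,…,k₁;T)·Z*(k_{i+1},…,k_r;T) as an element of ℝ[x,y,T],
where x, y, T are the variables X 0, X 1, X 2. -/
noncomputable def zetaXYpoly (Z : List ℕ → Polynomial ℝ) (k : List ℕ) :
    MvPolynomial (Fin 3) ℝ :=
  ∑ i ∈ Finset.range (k.length + 1),
    MvPolynomial.X 0 ^ (k.take i).sum * MvPolynomial.X 1 ^ (k.drop i).sum
      * Polynomial.aeval (MvPolynomial.X 2) (Z (k.take i).reverse)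
      * Polynomial.aeval (MvPolynomial.X 2) (Z (k.drop i))

section Aux
open Finset

def ones (n : ℕ) : List ℕ := List.replicate n 1

/-- insert a `1` at position `n` (append at end if `n ≥ length`). -/
def ins1 : ℕ → List ℕ → List ℕ
  | 0, l => 1 :: l
  | _+1, [] => [1]
  | n+1, a :: as => a :: ins1 n as

/-- add `1` to the entry at position `n` (no-op past the end). -/
def inc1 : ℕ → List ℕ → List ℕ
  | _, [] => []
  | 0, a :: as => (a+1) :: as
  | n+1, a :: as => a :: inc1 n as

lemma ins1_ge : ∀ (l : List ℕ) (n : ℕ), l.length ≤ n → ins1 n l = l ++ [1]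
  | [], 0, _ => rfl
  | [], _+1, _ => rfl
  | a :: as, n+1, h => by
      simp only [ins1, List.cons_append, List.cons.injEq, true_and]
      exact ins1_ge as n (by simpa using h)

lemma ins1_append_left : ∀ (u : List ℕ) (n : ℕ) (w : List ℕ), n ≤ u.length →
    ins1 n (u ++ w) = ins1 n u ++ w
  | _, 0, _, _ => rfl
  | a :: as, n+1, w, h => by
      simp only [List.cons_append, ins1, List.cons.injEq, true_and]
      exact ins1_append_left as n w (by simpa using h)

lemma ins1_append_right : ∀ (u : List ℕ) (q : ℕ) (w : List ℕ), q ≠ 0 →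
    ins1 (u.length + q) (u ++ w) = u ++ ins1 q w
  | [], q, w, _ => by simp
  | a :: as, q, w, hq => by
      have : (a :: as).length + q = (as.length + q) + 1 := by
        simp [List.length_cons]; omega
      rw [this]
      simp only [List.cons_append, ins1, List.cons.injEq, true_and]
      exact ins1_append_right as q w hq

lemma inc1_append_left : ∀ (u : List ℕ) (n : ℕ) (w : List ℕ), n < u.length →
    inc1 n (u ++ w) = inc1 n u ++ w
  | a :: as, 0, w, _ => rfl
  | a :: as, n+1, w, h => by
      simp only [List.cons_append, inc1, List.cons.injEq, true_and]
      exact inc1_append_left as n w (by simpa using h)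

lemma inc1_append_right : ∀ (u : List ℕ) (q : ℕ) (w : List ℕ),
    inc1 (u.length + q) (u ++ w) = u ++ inc1 q w
  | [], q, w => by simp
  | a :: as, q, w => by
      have : (a :: as).length + q = (as.length + q) + 1 := by
        simp [List.length_cons]; omega
      rw [this]
      simp only [List.cons_append, inc1, List.cons.injEq, true_and]
      exact inc1_append_right as q w

lemma length_ins1 : ∀ (n : ℕ) (l : List ℕ), (ins1 n l).length = l.length + 1
  | 0, l => rfl
  | _+1, [] => rfl
  | n+1, a :: as => by simp [ins1, length_ins1 n as]

lemma length_inc1 : ∀ (n : ℕ) (l : List ℕ), (inc1 n l).length = l.length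
  | n, [] => by cases n <;> rfl
  | 0, a :: as => rfl
  | n+1, a :: as => by simp [inc1, length_inc1 n as]

lemma ins1_reverse : ∀ (m : List ℕ) (p : ℕ), p ≤ m.length →
    (ins1 p m).reverse = ins1 (m.length - p) m.reverse
  | [], 0, _ => rfl
  | a :: as, 0, _ => by
      show (1 :: a :: as).reverse = ins1 ((a :: as).length - 0) (a :: as).reverse
      rw [List.reverse_cons, List.reverse_cons, Nat.sub_zero,
        ins1_ge _ _ (by simp)]
  | a :: as, p+1, h => by
      have h' : p ≤ as.length := by simpa using h
      show (a :: ins1 p as).reverse = ins1 ((a :: as).length - (p+1)) (a :: as).reverse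
      rw [List.reverse_cons, ins1_reverse as p h',
        show (a :: as).length - (p+1) = as.length - p from by simp [List.length_cons],
        List.reverse_cons, ins1_append_left _ _ _ (by simp)]

lemma inc1_reverse : ∀ (m : List ℕ) (p : ℕ), p < m.length →
    (inc1 p m).reverse = inc1 (m.length - 1 - p) m.reverse
  | a :: as, 0, _ => by
      show ((a+1) :: as).reverse = inc1 ((a :: as).length - 1 - 0) (a :: as).reverse
      rw [List.reverse_cons, List.reverse_cons,
        show (a :: as).length - 1 - 0 = as.reverse.length + 0 from by simp,
        inc1_append_right]
      rfl
  | a :: as, p+1, h => by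
      have h' : p < as.length := by simpa using h
      show (a :: inc1 p as).reverse = inc1 ((a :: as).length - 1 - (p+1)) (a :: as).reverse
      rw [List.reverse_cons, inc1_reverse as p h',
        show (a :: as).length - 1 - (p+1) = as.length - 1 - p from by
          simp only [List.length_cons]; omega,
        List.reverse_cons, inc1_append_left _ _ _ (by simp; omega)]

lemma ins1_ones (p n : ℕ) (v : List ℕ) (h : p ≤ n) :
    ins1 p (ones n ++ v) = ones (n+1) ++ v := by
  induction n generalizing p with
  | zero => simp at h; subst h; rfl
  | succ n ih =>
      match p with
      | 0 => rfl
      | p+1 =>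
          show (1 : ℕ) :: ins1 p (ones n ++ v) = 1 :: (ones (n+1) ++ v)
          rw [ih p (by omega)]

lemma inc1_ones (p n : ℕ) (v : List ℕ) (h : p < n) :
    inc1 p (ones n ++ v) = ones p ++ 2 :: (ones (n-1-p) ++ v) := by
  induction n generalizing p with
  | zero => omega
  | succ n ih =>
      match p with
      | 0 => simp [ones, inc1, List.replicate_succ]
      | p+1 =>
          rw [show (n+1) - 1 - (p+1) = n - 1 - p from by omega]
          show (1:ℕ) :: inc1 p (ones n ++ v) = 1 :: (ones p ++ 2 :: (ones (n-1-p) ++ v))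
          rw [ih p (by omega)]

lemma ins1_ones_right (n q : ℕ) (v : List ℕ) (hq : q ≠ 0) :
    ins1 (n + q) (ones n ++ v) = ones n ++ ins1 q v := by
  have : n = (ones n).length := by simp [ones]
  rw [show n + q = (ones n).length + q by simp [ones], ins1_append_right _ _ _ hq]

lemma inc1_ones_right (n q : ℕ) (v : List ℕ) :
    inc1 (n + q) (ones n ++ v) = ones n ++ inc1 q v := by
  rw [show n + q = (ones n).length + q by simp [ones], inc1_append_right]


lemma harmAux_nil_right (a : List ℕ) : harmAux a [] = Finsupp.single a 1 := by
  cases a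
  · exact harmAux.eq_1 []
  · exact harmAux.eq_2 _ (by simp)

@[simp] lemma ins1_zero (l : List ℕ) : ins1 0 l = 1 :: l := rfl
@[simp] lemma ins1_succ_cons (n a : ℕ) (as : List ℕ) :
    ins1 (n+1) (a :: as) = a :: ins1 n as := rfl
@[simp] lemma inc1_zero_cons (a : ℕ) (as : List ℕ) : inc1 0 (a :: as) = (a+1) :: as := rfl
@[simp] lemma inc1_succ_cons (n a : ℕ) (as : List ℕ) :
    inc1 (n+1) (a :: as) = a :: inc1 n as := rfl

lemma harmAux_one (m : List ℕ) :
    harmAux m [1] = (∑ p ∈ range (m.length + 1), Finsupp.single (ins1 p m) 1)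
      + ∑ p ∈ range m.length, Finsupp.single (inc1 p m) 1 := by
  induction m with
  | nil => rw [harmAux.eq_1]; simp
  | cons a as ih =>
      rw [harmAux.eq_3 a as 1 [], harmAux_nil_right, harmAux_nil_right, ih]
      rw [Finsupp.mapDomain_add, Finsupp.mapDomain_single, Finsupp.mapDomain_single,
        Finsupp.mapDomain_finset_sum, Finsupp.mapDomain_finset_sum]
      simp only [Finsupp.mapDomain_single]
      simp only [List.length_cons]
      rw [Finset.sum_range_succ' (fun p => Finsupp.single (ins1 p (a :: as)) (1:ℚ)),
        Finset.sum_range_succ' (fun p => Finsupp.single (inc1 p (a :: as)) (1:ℚ))]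
      simp only [ins1_zero, ins1_succ_cons, inc1_zero_cons, inc1_succ_cons,
        List.length_cons]
      abel

lemma harm_one (l : List ℕ) :
    harm l [1] = (∑ p ∈ range (l.length + 1), Finsupp.single (ins1 p l) 1)
      + ∑ p ∈ range l.length, Finsupp.single (inc1 p l) 1 := by
  have h1 : ([1] : List ℕ).reverse = [1] := rfl
  show Finsupp.mapDomain List.reverse (harmAux l.reverse ([1].reverse)) = _
  rw [h1, harmAux_one, Finsupp.mapDomain_add, Finsupp.mapDomain_finset_sum,
    Finsupp.mapDomain_finset_sum]
  simp only [Finsupp.mapDomain_single, List.length_reverse]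
  congr 1
  · rw [← Finset.sum_range_reflect (fun p => Finsupp.single (ins1 p l) (1:ℚ))]
    apply Finset.sum_congr rfl
    intro p hp
    rw [ins1_reverse l.reverse p (by simp only [Finset.mem_range, List.length_reverse] at hp ⊢; omega),
      List.reverse_reverse, List.length_reverse]
    congr 2
    all_goals omega
  · rw [← Finset.sum_range_reflect (fun p => Finsupp.single (inc1 p l) (1:ℚ))]
    apply Finset.sum_congr rfl
    intro p hp
    rw [inc1_reverse l.reverse p (by simp only [Finset.mem_range, List.length_reverse] at hp ⊢; omega),
      List.reverse_reverse, List.length_reverse]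

lemma Zext_add (Z : List ℕ → Polynomial ℝ) (v w : List ℕ →₀ ℚ) :
    Zext Z (v + w) = Zext Z v + Zext Z w :=
  Finsupp.sum_add_index' (fun a => zero_smul ℚ (Z a)) (fun a b₁ b₂ => add_smul b₁ b₂ (Z a))

lemma Zext_single_one (Z : List ℕ → Polynomial ℝ) (m : List ℕ) :
    Zext Z (Finsupp.single m 1) = Z m := by
  unfold Zext
  rw [Finsupp.sum_single_index (zero_smul ℚ (Z m)), one_smul]

lemma Zext_sum (Z : List ℕ → Polynomial ℝ) {ι : Type*} (s : Finset ι) (f : ι → (List ℕ →₀ ℚ)) :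
    Zext Z (∑ i ∈ s, f i) = ∑ i ∈ s, Zext Z (f i) := by
  classical
  induction s using Finset.induction with
  | empty => simp [Zext]
  | @insert a s h ih => rw [Finset.sum_insert h, Finset.sum_insert h, Zext_add, ih]

lemma isIndex_ones_append (t : ℕ) (v : List ℕ) (hv : IsIndex v) : IsIndex (ones t ++ v) := by
  intro a ha
  rcases List.mem_append.mp ha with h | h
  · rw [List.eq_of_mem_replicate h]
  · exact hv a h

lemma isIndex_ins1 : ∀ (n : ℕ) (l : List ℕ), IsIndex l → IsIndex (ins1 n l)
  | 0, l, h => by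
      intro a ha
      rcases List.mem_cons.mp ha with rfl | ha
      · exact le_refl 1
      · exact h a ha
  | _+1, [], _ => by
      intro a ha
      rcases List.mem_cons.mp ha with rfl | ha
      · exact le_refl 1
      · simp at ha
  | n+1, b :: bs, h => by
      intro a ha
      rcases List.mem_cons.mp ha with rfl | ha
      · exact h a (by simp)
      · exact isIndex_ins1 n bs (fun x hx => h x (by simp [hx])) a ha

lemma inc1_nil (n : ℕ) : inc1 n [] = [] := by cases n <;> rfl

lemma isIndex_inc1 : ∀ (n : ℕ) (l : List ℕ), IsIndex l → IsIndex (inc1 n l)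
  | n, [], h => by rw [inc1_nil]; exact h
  | 0, b :: bs, h => by
      intro a ha
      rcases List.mem_cons.mp ha with rfl | ha
      · omega
      · exact h a (by simp [ha])
  | n+1, b :: bs, h => by
      intro a ha
      rcases List.mem_cons.mp ha with rfl | ha
      · exact h a (by simp)
      · exact isIndex_inc1 n bs (fun x hx => h x (by simp [hx])) a ha

lemma isAdmissible_ins1_succ (n : ℕ) (v : List ℕ) (hadm : IsAdmissible v) (hne : v ≠ []) :
    IsAdmissible (ins1 (n+1) v) := by
  match v with
  | [] => exact absurd rfl hne
  | a :: as =>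
      intro x hx
      simp only [ins1_succ_cons, List.head?_cons, Option.mem_some_iff] at hx
      subst hx
      exact hadm a (by simp)

lemma isAdmissible_inc1 (n : ℕ) (v : List ℕ) (hv : IsIndex v) (hadm : IsAdmissible v) :
    IsAdmissible (inc1 n v) := by
  match v, n with
  | [], n =>
      intro x hx
      rw [inc1_nil] at hx
      simp at hx
  | a :: as, 0 =>
      intro x hx
      simp only [inc1_zero_cons, List.head?_cons, Option.mem_some_iff] at hx
      subst hx
      have := hv a (by simp)
      omega
  | a :: as, n+1 =>
      intro x hx
      simp only [inc1_succ_cons, List.head?_cons, Option.mem_some_iff] at hx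
      subst hx
      exact hadm a (by simp)

lemma isAdmissible_two_cons (l : List ℕ) : IsAdmissible (2 :: l) := by
  intro x hx
  simp only [List.head?_cons, Option.mem_some_iff] at hx
  omega

lemma isIndex_two_block (s : ℕ) (v : List ℕ) (hv : IsIndex v) : IsIndex (2 :: (ones s ++ v)) := by
  intro a ha
  rcases List.mem_cons.mp ha with rfl | ha
  · omega
  · exact isIndex_ones_append s v hv a ha

section ZsSection
variable (Zs : List ℕ → Polynomial ℝ)

lemma MI (hmul : ∀ k l, IsIndex k → IsIndex l → Zext Zs (harm k l) = Zs k * Zs l)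
    (hone : Zs [1] = Polynomial.X) (l : List ℕ) (hl : IsIndex l) :
    Zs l * Polynomial.X
      = (∑ p ∈ range (l.length + 1), Zs (ins1 p l)) + ∑ p ∈ range l.length, Zs (inc1 p l) := by
  have h1 : IsIndex [1] := by intro a ha; simp at ha; omega
  rw [← hone, ← hmul l [1] hl h1, harm_one, Zext_add, Zext_sum, Zext_sum]
  simp only [Zext_single_one]

lemma MI_ones (hmul : ∀ k l, IsIndex k → IsIndex l → Zext Zs (harm k l) = Zs k * Zs l)
    (hone : Zs [1] = Polynomial.X) (t : ℕ) (v : List ℕ) (hv : IsIndex v) :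
    Zs (ones t ++ v) * Polynomial.X
      = ((t : ℝ) + 1) • Zs (ones (t+1) ++ v)
        + ∑ q ∈ range v.length, Zs (ones t ++ ins1 (q+1) v)
        + ∑ p ∈ range t, Zs (ones p ++ 2 :: (ones (t-1-p) ++ v))
        + ∑ q ∈ range v.length, Zs (ones t ++ inc1 q v) := by
  rw [MI Zs hmul hone _ (isIndex_ones_append t v hv)]
  rw [show (ones t ++ v).length = t + v.length from by simp [ones]]
  rw [show t + v.length + 1 = (t+1) + v.length from by omega]
  rw [Finset.sum_range_add (fun p => Zs (ins1 p (ones t ++ v))) (t+1) v.length,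
    Finset.sum_range_add (fun p => Zs (inc1 p (ones t ++ v))) t v.length]
  have e1 : ∑ p ∈ range (t+1), Zs (ins1 p (ones t ++ v)) = ((t:ℝ)+1) • Zs (ones (t+1) ++ v) := by
    rw [Finset.sum_congr rfl (fun p hp => by
      rw [ins1_ones p t v (by simp only [Finset.mem_range] at hp; omega)])]
    rw [Finset.sum_const, Finset.card_range, ← Nat.cast_smul_eq_nsmul ℝ]
    push_cast
    rfl
  have e2 : ∑ q ∈ range v.length, Zs (ins1 (t + 1 + q) (ones t ++ v))
      = ∑ q ∈ range v.length, Zs (ones t ++ ins1 (q+1) v) := by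
    refine Finset.sum_congr rfl (fun q hq => ?_)
    rw [show t + 1 + q = t + (q+1) from by omega, ins1_ones_right t (q+1) v (by omega)]
  have e3 : ∑ p ∈ range t, Zs (inc1 p (ones t ++ v))
      = ∑ p ∈ range t, Zs (ones p ++ 2 :: (ones (t-1-p) ++ v)) := by
    refine Finset.sum_congr rfl (fun p hp => ?_)
    rw [inc1_ones p t v (by simp only [Finset.mem_range] at hp; omega)]
  have e4 : ∑ q ∈ range v.length, Zs (inc1 (t + q) (ones t ++ v))
      = ∑ q ∈ range v.length, Zs (ones t ++ inc1 q v) := by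
    refine Finset.sum_congr rfl (fun q hq => ?_)
    rw [inc1_ones_right t q v]
  rw [e1, e2, e3, e4]
  abel

lemma MIc (hmul : ∀ k l, IsIndex k → IsIndex l → Zext Zs (harm k l) = Zs k * Zs l)
    (hone : Zs [1] = Polynomial.X) (t : ℕ) (v : List ℕ) (hv : IsIndex v) :
    (∑ q ∈ range v.length, (Zs (ones t ++ ins1 (q+1) v)).eval 0)
    + (∑ p ∈ range t, (Zs (ones p ++ 2 :: (ones (t-1-p) ++ v))).eval 0)
    + (∑ q ∈ range v.length, (Zs (ones t ++ inc1 q v)).eval 0)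
    = -(((t:ℝ)+1) * (Zs (ones (t+1) ++ v)).eval 0) := by
  have h := congrArg (Polynomial.eval 0) (MI_ones Zs hmul hone t v hv)
  simp only [Polynomial.eval_mul, Polynomial.eval_X, mul_zero, Polynomial.eval_add,
    Polynomial.eval_smul, Polynomial.eval_finset_sum, smul_eq_mul] at h
  linarith

end ZsSection

lemma coeff_sum_C_X_pow (N : ℕ) (a : ℕ → ℝ) (i : ℕ) :
    (∑ j ∈ range N, Polynomial.C (a j) * Polynomial.X ^ j).coeff i
      = if i < N then a i else 0 := by
  rw [Polynomial.finset_sum_coeff]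
  simp only [Polynomial.coeff_C_mul, Polynomial.coeff_X_pow, mul_ite, mul_one, mul_zero]
  rw [Finset.sum_ite_eq (range N) i a]
  simp [Finset.mem_range]

lemma coeff_sum_C_X_pow_succ (N : ℕ) (a : ℕ → ℝ) (i : ℕ) :
    (∑ j ∈ range N, Polynomial.C (a j) * Polynomial.X ^ (j+1)).coeff i
      = if 1 ≤ i ∧ i < N + 1 then a (i-1) else 0 := by
  rw [Polynomial.finset_sum_coeff]
  simp only [Polynomial.coeff_C_mul, Polynomial.coeff_X_pow, mul_ite, mul_one, mul_zero]
  match i with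
  | 0 => simp
  | s+1 =>
      have he : ∀ j : ℕ, (s + 1 = j + 1) = (s = j) := fun j => by
        simp [Nat.add_right_cancel_iff]
      simp only [he]
      rw [Finset.sum_ite_eq (range N) s a]
      simp only [Finset.mem_range, Nat.add_sub_cancel]
      by_cases h : s < N
      · rw [if_pos h, if_pos ⟨by omega, by omega⟩]
      · rw [if_neg h, if_neg (by omega)]

lemma sum_C_X_pow_mul (N : ℕ) (a : ℕ → ℝ) :
    (∑ j ∈ range N, Polynomial.C (a j) * Polynomial.X ^ j) * Polynomial.X
      = ∑ j ∈ range N, Polynomial.C (a j) * Polynomial.X ^ (j+1) := by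
  rw [Finset.sum_mul]
  exact Finset.sum_congr rfl (fun j _ => by ring)

lemma fact_inv_succ (i : ℕ) (h : 1 ≤ i) :
    ((i.factorial : ℝ))⁻¹ * (i : ℝ) = (((i-1).factorial : ℝ))⁻¹ := by
  obtain ⟨s, rfl⟩ : ∃ s, i = s + 1 := ⟨i - 1, by omega⟩
  rw [show s + 1 - 1 = s from rfl, Nat.factorial_succ]
  have h1 : ((s.factorial : ℕ) : ℝ) ≠ 0 := by
    exact_mod_cast s.factorial_ne_zero
  push_cast
  rw [mul_inv]
  field_simp

section QSection

lemma Qexp (Zs : List ℕ → Polynomial ℝ)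
    (hadm : ∀ k, IsIndex k → IsAdmissible k → Zs k = Polynomial.C (mzv k))
    (hone : Zs [1] = Polynomial.X)
    (hmul : ∀ k l, IsIndex k → IsIndex l → Zext Zs (harm k l) = Zs k * Zs l) :
    ∀ (n : ℕ) (v : List ℕ), IsIndex v → IsAdmissible v →
    Zs (ones n ++ v) = ∑ j ∈ range (n+1),
      Polynomial.C ((Zs (ones (n-j) ++ v)).eval 0 * ((j.factorial : ℝ))⁻¹) * Polynomial.X ^ j := by
  intro n
  induction n using Nat.strong_induction_on with
  | _ n IH =>
    intro v hv hadmv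
    match n with
    | 0 =>
        rw [Finset.sum_range_one]
        rw [show ones 0 ++ v = v from by simp [ones]]
        rw [hadm v hv hadmv]
        simp
    | Nat.succ m =>
        have hvne : 0 < v.length → v ≠ [] := by
          intro h hc; subst hc; simp at h
        have key := (MI_ones Zs hmul hone m v hv).symm
        have IH0 := IH m (by omega) v hv hadmv
        have hSA : ∑ q ∈ range v.length, Zs (ones m ++ ins1 (q+1) v)
            = ∑ q ∈ range v.length, ∑ j ∈ range (m+1),
                Polynomial.C ((Zs (ones (m-j) ++ ins1 (q+1) v)).eval 0 * ((j.factorial : ℝ))⁻¹)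
                  * Polynomial.X ^ j := by
          refine Finset.sum_congr rfl (fun q hq => ?_)
          exact IH m (by omega) (ins1 (q+1) v) (isIndex_ins1 (q+1) v hv)
            (isAdmissible_ins1_succ q v hadmv (hvne (by simp only [Finset.mem_range] at hq; omega)))
        have hSC : ∑ q ∈ range v.length, Zs (ones m ++ inc1 q v)
            = ∑ q ∈ range v.length, ∑ j ∈ range (m+1),
                Polynomial.C ((Zs (ones (m-j) ++ inc1 q v)).eval 0 * ((j.factorial : ℝ))⁻¹)
                  * Polynomial.X ^ j := by
          refine Finset.sum_congr rfl (fun q hq => ?_)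
          exact IH m (by omega) (inc1 q v) (isIndex_inc1 q v hv)
            (isAdmissible_inc1 q v hv hadmv)
        have hSB : ∑ p ∈ range m, Zs (ones p ++ 2 :: (ones (m-1-p) ++ v))
            = ∑ p ∈ range m, ∑ j ∈ range (p+1),
                Polynomial.C ((Zs (ones (p-j) ++ 2 :: (ones (m-1-p) ++ v))).eval 0
                  * ((j.factorial : ℝ))⁻¹) * Polynomial.X ^ j := by
          refine Finset.sum_congr rfl (fun p hp => ?_)
          exact IH p (by simp only [Finset.mem_range] at hp; omega)
            (2 :: (ones (m-1-p) ++ v)) (isIndex_two_block _ v hv) (isAdmissible_two_cons _)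
        rw [IH0, hSA, hSB, hSC] at key
        -- key : ((m:ℝ)+1) • Zs (ones (m+1) ++ v) + SA' + SB' + SC' = T m * X
        have main : ((m:ℝ)+1) • (∑ j ∈ range (m+1+1),
              Polynomial.C ((Zs (ones (m+1-j) ++ v)).eval 0 * ((j.factorial : ℝ))⁻¹)
                * Polynomial.X ^ j)
            + (∑ q ∈ range v.length, ∑ j ∈ range (m+1),
                Polynomial.C ((Zs (ones (m-j) ++ ins1 (q+1) v)).eval 0 * ((j.factorial : ℝ))⁻¹)
                  * Polynomial.X ^ j)
            + (∑ p ∈ range m, ∑ j ∈ range (p+1),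
                Polynomial.C ((Zs (ones (p-j) ++ 2 :: (ones (m-1-p) ++ v))).eval 0
                  * ((j.factorial : ℝ))⁻¹) * Polynomial.X ^ j)
            + (∑ q ∈ range v.length, ∑ j ∈ range (m+1),
                Polynomial.C ((Zs (ones (m-j) ++ inc1 q v)).eval 0 * ((j.factorial : ℝ))⁻¹)
                  * Polynomial.X ^ j)
            = (∑ j ∈ range (m+1),
                Polynomial.C ((Zs (ones (m-j) ++ v)).eval 0 * ((j.factorial : ℝ))⁻¹)
                  * Polynomial.X ^ j) * Polynomial.X := by
          apply Polynomial.ext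
          intro i
          rw [Polynomial.coeff_add, Polynomial.coeff_add, Polynomial.coeff_add,
            Polynomial.coeff_smul, sum_C_X_pow_mul, coeff_sum_C_X_pow_succ,
            coeff_sum_C_X_pow, Polynomial.finset_sum_coeff, Polynomial.finset_sum_coeff,
            Polynomial.finset_sum_coeff]
          simp only [coeff_sum_C_X_pow, smul_eq_mul]
          by_cases h1 : i < m + 1
          · -- main region
            rw [if_pos (by omega : i < m+1+1)]
            simp only [if_pos h1]
            -- triangular sum
            have htri : ∑ p ∈ range m, (if i < p + 1 then
                (Zs (ones (p-i) ++ 2 :: (ones (m-1-p) ++ v))).eval 0 * ((i.factorial : ℝ))⁻¹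
                else 0)
                = ∑ p ∈ range (m - i),
                  (Zs (ones p ++ 2 :: (ones (m-i-1-p) ++ v))).eval 0 * ((i.factorial : ℝ))⁻¹ := by
              rw [← Finset.sum_filter]
              rw [show (range m).filter (fun p => i < p + 1) = Finset.Ico i m from by
                ext x; simp [Finset.mem_filter, Finset.mem_range, Finset.mem_Ico]; omega]
              rw [Finset.sum_Ico_eq_sum_range]
              refine Finset.sum_congr rfl (fun p hp => ?_)
              rw [show i + p - i = p from by omega, show m - 1 - (i + p) = m - i - 1 - p from by omega]
            rw [htri]
            have hmiC := MIc Zs hmul hone (m - i) v hv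
            rw [← Finset.sum_mul, ← Finset.sum_mul, ← Finset.sum_mul]
            rw [show m - i + 1 = m + 1 - i from by omega] at hmiC
            have hcast : ((m - i : ℕ) : ℝ) = (m : ℝ) - (i : ℝ) := by
              push_cast [Nat.cast_sub (by omega : i ≤ m)]; ring
            rw [hcast] at hmiC
            by_cases h0 : 1 ≤ i
            · rw [if_pos (⟨h0, by omega⟩ : 1 ≤ i ∧ i < m + 1 + 1)]
              rw [show m - (i - 1) = m + 1 - i from by omega]
              have hfi := fact_inv_succ i h0
              push_cast
              linear_combination hmiC * ((i.factorial:ℝ))⁻¹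
                + (Zs (ones (m+1-i) ++ v)).eval 0 * hfi
            · have hi0 : i = 0 := by omega
              subst hi0
              rw [if_neg (by omega)]
              simp only [Nat.factorial_zero, Nat.cast_one, inv_one, Nat.sub_zero,
                Nat.cast_zero, sub_zero] at hmiC ⊢
              push_cast
              linear_combination hmiC
          · by_cases h2 : i = m + 1
            · subst h2
              rw [if_pos (by omega : m + 1 < m + 1 + 1)]
              simp only [if_neg (by omega : ¬ (m + 1 < m + 1))]
              rw [if_pos (⟨by omega, by omega⟩ : 1 ≤ m+1 ∧ m+1 < m+1+1)]
              simp only [mul_zero, Finset.sum_const_zero, add_zero]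
              have hz : ∑ p ∈ range m, (if m + 1 < p + 1 then
                  (Zs (ones (p-(m+1)) ++ 2 :: (ones (m-1-p) ++ v))).eval 0
                    * (((m+1).factorial : ℝ))⁻¹ else 0) = 0 := by
                refine Finset.sum_eq_zero (fun p hp => ?_)
                rw [if_neg (by simp only [Finset.mem_range] at hp; omega)]
              rw [hz, add_zero]
              rw [show m + 1 - (m + 1) = 0 from by omega, show m + 1 - 1 = m from rfl,
                show m - m = 0 from by omega]
              have hfi := fact_inv_succ (m+1) (by omega)
              rw [show m + 1 - 1 = m from rfl] at hfi
              push_cast at hfi ⊢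
              linear_combination (Zs (ones 0 ++ v)).eval 0 * hfi
            · -- i ≥ m+2
              rw [if_neg (by omega : ¬ i < m+1+1), if_neg (by omega : ¬ (1 ≤ i ∧ i < m+1+1))]
              simp only [if_neg h1, mul_zero, Finset.sum_const_zero, add_zero]
              have hz : ∑ p ∈ range m, (if i < p + 1 then
                  (Zs (ones (p-i) ++ 2 :: (ones (m-1-p) ++ v))).eval 0
                    * ((i.factorial : ℝ))⁻¹ else 0) = 0 := by
                refine Finset.sum_eq_zero (fun p hp => ?_)
                rw [if_neg (by simp only [Finset.mem_range] at hp; omega)]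
              rw [hz]
              ring
        have hcancel := main.trans key.symm
        have h3 := add_right_cancel hcancel
        have h4 := add_right_cancel h3
        have h5 := add_right_cancel h4
        have hne : ((m:ℝ)+1) ≠ 0 := by positivity
        exact (smul_right_injective (Polynomial ℝ) hne h5).symm

end QSection

def lead : List ℕ → ℕ
  | [] => 0
  | a :: as => if a = 1 then lead as + 1 else 0

lemma lead_le_length : ∀ l : List ℕ, lead l ≤ l.length
  | [] => le_refl 0
  | a :: as => by
      show (if a = 1 then lead as + 1 else 0) ≤ as.length + 1
      split
      · have := lead_le_length as; omega
      · omega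

lemma take_lead : ∀ l : List ℕ, l.take (lead l) = ones (lead l)
  | [] => rfl
  | a :: as => by
      show (a :: as).take (if a = 1 then lead as + 1 else 0) = ones (if a = 1 then lead as + 1 else 0)
      split
      · next h =>
          subst h
          show (1 : ℕ) :: as.take (lead as) = ones (lead as + 1)
          rw [take_lead as]
          rfl
      · rfl

lemma ones_append_drop_lead (l : List ℕ) : ones (lead l) ++ l.drop (lead l) = l := by
  rw [← take_lead l, List.take_append_drop]

lemma isAdmissible_drop_lead : ∀ l : List ℕ, IsIndex l → IsAdmissible (l.drop (lead l))
  | [] => fun _ => by simp [lead, IsAdmissible]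
  | a :: as => by
      intro h
      show IsAdmissible ((a :: as).drop (if a = 1 then lead as + 1 else 0))
      split
      · next ha =>
          show IsAdmissible (as.drop (lead as))
          exact isAdmissible_drop_lead as (fun x hx => h x (by simp [hx]))
      · next ha =>
          intro x hx
          simp only [List.drop_zero, List.head?_cons, Option.mem_some_iff] at hx
          have h2 := h a (by simp)
          omega

lemma isIndex_drop (l : List ℕ) (j : ℕ) (h : IsIndex l) : IsIndex (l.drop j) :=
  fun a ha => h a (List.mem_of_mem_drop ha)

lemma isIndex_take (l : List ℕ) (j : ℕ) (h : IsIndex l) : IsIndex (l.take j) :=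
  fun a ha => h a (List.mem_of_mem_take ha)

lemma isIndex_reverse (l : List ℕ) (h : IsIndex l) : IsIndex l.reverse :=
  fun a ha => h a (by rwa [List.mem_reverse] at ha)

lemma lead_getD : ∀ (l : List ℕ) (t : ℕ), t < lead l → l.getD t 0 = 1
  | [], t => by simp [lead]
  | a :: as, t => by
      show t < (if a = 1 then lead as + 1 else 0) → _
      split
      · next ha =>
          intro ht
          match t with
          | 0 => simpa using ha
          | s+1 =>
              show as.getD s 0 = 1
              exact lead_getD as s (by omega)
      · omega

lemma le_lead : ∀ (l : List ℕ) (m : ℕ), m ≤ l.length → (∀ t, t < m → l.getD t 0 = 1) →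
    m ≤ lead l
  | l, 0, _, _ => Nat.zero_le _
  | [], m+1, h, _ => by simp at h
  | a :: as, m+1, h, hones => by
      have ha : a = 1 := by simpa using hones 0 (by omega)
      show m + 1 ≤ (if a = 1 then lead as + 1 else 0)
      rw [if_pos ha]
      have : m ≤ lead as := le_lead as m (by simp at h; omega)
        (fun t ht => hones (t+1) (by omega))
      omega

lemma drop_ones_append (j n : ℕ) (v : List ℕ) (h : j ≤ n) :
    List.drop j (ones n ++ v) = ones (n - j) ++ v := by
  simp only [ones]
  rw [List.drop_append_of_le_length (by simp; omega), List.drop_replicate]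

lemma Qdrop (Zs : List ℕ → Polynomial ℝ)
    (hadm : ∀ k, IsIndex k → IsAdmissible k → Zs k = Polynomial.C (mzv k))
    (hone : Zs [1] = Polynomial.X)
    (hmul : ∀ k l, IsIndex k → IsIndex l → Zext Zs (harm k l) = Zs k * Zs l)
    (l : List ℕ) (hl : IsIndex l) :
    Zs l = ∑ j ∈ range (lead l + 1),
      Polynomial.C ((Zs (l.drop j)).eval 0 * ((j.factorial : ℝ))⁻¹) * Polynomial.X ^ j := by
  have h0 := Qexp Zs hadm hone hmul (lead l) (l.drop (lead l))
    (isIndex_drop l _ hl) (isAdmissible_drop_lead l hl)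
  rw [ones_append_drop_lead] at h0
  rw [h0]
  refine Finset.sum_congr rfl (fun j hj => ?_)
  have he : ones (lead l - j) ++ l.drop (lead l) = l.drop j := by
    rw [← drop_ones_append j (lead l) (l.drop (lead l))
      (by simp only [Finset.mem_range] at hj; omega), ones_append_drop_lead]
  rw [he]

lemma length_take_of_le' {α : Type*} (l : List α) (c : ℕ) (h : c ≤ l.length) :
    (l.take c).length = c := by
  simp [List.length_take, min_eq_left h]

lemma sum_shift_down {M : Type*} [AddCommMonoid M] (r c t : ℕ) (hc : c ≤ r) (ht : t ≤ c)
    (f : ℕ → M) :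
    ∑ p ∈ range (t+1), f (c - p)
      = ∑ i ∈ range (r+1), if c - t ≤ i ∧ i ≤ c then f i else 0 := by
  have h1 : ∑ i ∈ range (r+1), (if c - t ≤ i ∧ i ≤ c then f i else 0)
      = ∑ i ∈ range (r+1), (if i ∈ Finset.Icc (c-t) c then f i else 0) := by
    refine Finset.sum_congr rfl (fun i _ => by simp [Finset.mem_Icc])
  rw [h1, Finset.sum_ite_mem]
  rw [show range (r+1) ∩ Finset.Icc (c-t) c = Finset.Icc (c-t) c from
    Finset.inter_eq_right.mpr (fun x hx => by
      simp only [Finset.mem_Icc] at hx; simp only [Finset.mem_range]; omega)]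
  rw [show Finset.Icc (c-t) c = Finset.Ico (c-t) (c+1) from by
    ext x; simp [Finset.mem_Icc, Finset.mem_Ico]]
  rw [Finset.sum_Ico_eq_sum_range]
  rw [show c + 1 - (c - t) = t + 1 from by omega]
  rw [← Finset.sum_range_reflect (fun p => f (c - p)) (t+1)]
  refine Finset.sum_congr rfl (fun p hp => ?_)
  simp only [Finset.mem_range] at hp
  congr 1
  omega

lemma sum_shift_up {M : Type*} [AddCommMonoid M] (r c t : ℕ) (hct : c + t ≤ r) (f : ℕ → M) :
    ∑ q ∈ range (t+1), f (c + q)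
      = ∑ j ∈ range (r+1), if c ≤ j ∧ j ≤ c + t then f j else 0 := by
  have h1 : ∑ j ∈ range (r+1), (if c ≤ j ∧ j ≤ c + t then f j else 0)
      = ∑ j ∈ range (r+1), (if j ∈ Finset.Icc c (c+t) then f j else 0) := by
    refine Finset.sum_congr rfl (fun j _ => by simp [Finset.mem_Icc])
  rw [h1, Finset.sum_ite_mem]
  rw [show range (r+1) ∩ Finset.Icc c (c+t) = Finset.Icc c (c+t) from
    Finset.inter_eq_right.mpr (fun x hx => by
      simp only [Finset.mem_Icc] at hx; simp only [Finset.mem_range]; omega)]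
  rw [show Finset.Icc c (c+t) = Finset.Ico c (c+t+1) from by
    ext x; simp [Finset.mem_Icc, Finset.mem_Ico]]
  rw [Finset.sum_Ico_eq_sum_range]
  rw [show c + t + 1 - c = t + 1 from by omega]

lemma getD_drop' (k : List ℕ) (c u : ℕ) : (k.drop c).getD u 0 = k.getD (c + u) 0 := by
  rw [List.getD_eq_getElem?_getD, List.getD_eq_getElem?_getD, List.getElem?_drop]

lemma getD_reverse_take (k : List ℕ) (c u : ℕ) (hu : u < c) (hc : c ≤ k.length) :
    ((k.take c).reverse).getD u 0 = k.getD (c - 1 - u) 0 := by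
  have hlen : (k.take c).length = c := length_take_of_le' k c hc
  have hu' : u < (k.take c).reverse.length := by simp [hlen]; omega
  have hcu : c - 1 - u < k.length := by omega
  rw [List.getD_eq_getElem (_) 0 hu', List.getD_eq_getElem (_) 0 hcu]
  rw [List.getElem_reverse]
  have : (k.take c)[(k.take c).length - 1 - u] = k[c - 1 - u]'(by omega) := by
    rw [List.getElem_take]
    congr 1
    omega
  rw [this]

lemma lead_reverse_take_le (k : List ℕ) (c : ℕ) (hc : c ≤ k.length) :
    lead ((k.take c).reverse) ≤ c := by
  have := lead_le_length ((k.take c).reverse)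
  simpa [length_take_of_le' k c hc] using this

lemma lead_drop_le (k : List ℕ) (c : ℕ) : lead (k.drop c) ≤ k.length - c := by
  have := lead_le_length (k.drop c)
  simpa using this

lemma prefix_cond (k : List ℕ) (c i : ℕ) (hc : c ≤ k.length) :
    (c - lead ((k.take c).reverse) ≤ i ∧ i ≤ c)
      ↔ (i ≤ c ∧ ∀ t ∈ Finset.Ico i c, k.getD t 0 = 1) := by
  constructor
  · rintro ⟨h1, h2⟩
    refine ⟨h2, fun t ht => ?_⟩
    simp only [Finset.mem_Ico] at ht
    have hu : c - 1 - t < lead ((k.take c).reverse) := by omega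
    have := lead_getD ((k.take c).reverse) (c - 1 - t) hu
    rwa [getD_reverse_take k c (c-1-t) (by omega) hc,
      show c - 1 - (c - 1 - t) = t from by omega] at this
  · rintro ⟨h2, hones⟩
    refine ⟨?_, h2⟩
    have hl : c - i ≤ lead ((k.take c).reverse) := by
      apply le_lead ((k.take c).reverse) (c - i)
        (by simp only [List.length_reverse, length_take_of_le' k c hc]; omega)
      intro u hu
      rw [getD_reverse_take k c u (by omega) hc]
      exact hones (c - 1 - u) (by simp only [Finset.mem_Ico]; omega)
    omega

lemma suffix_cond (k : List ℕ) (c j : ℕ) (hc : c ≤ k.length) :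
    (c ≤ j ∧ j ≤ c + lead (k.drop c))
      ↔ (c ≤ j ∧ j ≤ k.length ∧ ∀ t ∈ Finset.Ico c j, k.getD t 0 = 1) := by
  have hld := lead_drop_le k c
  constructor
  · rintro ⟨h1, h2⟩
    refine ⟨h1, by omega, fun t ht => ?_⟩
    simp only [Finset.mem_Ico] at ht
    have := lead_getD (k.drop c) (t - c) (by omega)
    rwa [getD_drop' k c (t - c), show c + (t - c) = t from by omega] at this
  · rintro ⟨h1, h2, hones⟩
    refine ⟨h1, ?_⟩
    have : j - c ≤ lead (k.drop c) := by
      apply le_lead (k.drop c) (j - c) (by simp; omega)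
      intro u hu
      rw [getD_drop' k c u]
      exact hones (c + u) (by simp only [Finset.mem_Ico]; omega)
    omega

lemma sum_take_of_ones (k : List ℕ) (i : ℕ) : ∀ (c : ℕ), i ≤ c → c ≤ k.length →
    (∀ t ∈ Finset.Ico i c, k.getD t 0 = 1) →
    (k.take c).sum = (k.take i).sum + (c - i) := by
  intro c
  induction c with
  | zero =>
      intro h1 _ _
      have : i = 0 := by omega
      subst this
      simp
  | succ c ih =>
      intro h1 h2 h3
      by_cases hic : i = c + 1
      · subst hic; simp
      · have hi : i ≤ c := by omega
        have hcl : c < k.length := by omega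
        have hstep : (k.take (c+1)).sum = (k.take c).sum + k[c] := List.sum_take_succ k c hcl
        have hgd : k[c] = 1 := by
          have := h3 c (by simp only [Finset.mem_Ico]; omega)
          rwa [List.getD_eq_getElem k 0 hcl] at this
        rw [hstep, hgd, ih hi (by omega) (fun t ht => h3 t (by
          simp only [Finset.mem_Ico] at ht ⊢; omega))]
        omega

lemma sum_drop_of_ones (k : List ℕ) (c j : ℕ) (h1 : c ≤ j) (h2 : j ≤ k.length)
    (hones : ∀ t ∈ Finset.Ico c j, k.getD t 0 = 1) :
    (k.drop c).sum = (k.drop j).sum + (j - c) := by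
  have ht := sum_take_of_ones k c j h1 h2 hones
  have e1 : (k.take c).sum + (k.drop c).sum = k.sum := by
    rw [← List.sum_append, List.take_append_drop]
  have e2 : (k.take j).sum + (k.drop j).sum = k.sum := by
    rw [← List.sum_append, List.take_append_drop]
  omega

lemma rev_take_drop (k : List ℕ) (c p : ℕ) (hc : c ≤ k.length) (hp : p ≤ c) :
    ((k.take c).reverse).drop p = (k.take (c - p)).reverse := by
  rw [List.reverse_take, List.drop_drop, List.reverse_take]
  congr 1
  omega

lemma choose_fact_inv (n m : ℕ) (h : m ≤ n) :
    ((n.factorial : ℝ))⁻¹ * (n.choose m : ℝ)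
      = ((m.factorial : ℝ))⁻¹ * (((n-m).factorial : ℝ))⁻¹ := by
  have key : ((n.choose m : ℕ) : ℝ) * (m.factorial : ℝ) * ((n-m).factorial : ℝ)
      = (n.factorial : ℝ) := by
    exact_mod_cast congrArg (fun x : ℕ => (x : ℝ)) (Nat.choose_mul_factorial_mul_factorial h)
  have h1 : ((m.factorial : ℕ) : ℝ) ≠ 0 := by exact_mod_cast m.factorial_ne_zero
  have h2 : (((n-m).factorial : ℕ) : ℝ) ≠ 0 := by exact_mod_cast (n-m).factorial_ne_zero
  have h3 : ((n.factorial : ℕ) : ℝ) ≠ 0 := by exact_mod_cast n.factorial_ne_zero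
  field_simp
  linear_combination key

lemma double_reindex {M : Type*} [AddCommMonoid M] (r c tl oc : ℕ) (hc : c ≤ r) (htl : tl ≤ c)
    (hoc : c + oc ≤ r) (G : ℕ → ℕ → M) :
    ∑ p ∈ range (tl+1), ∑ q ∈ range (oc+1), G (c-p) (c+q)
      = ∑ i ∈ range (r+1), ∑ j ∈ range (r+1),
          if (c - tl ≤ i ∧ i ≤ c) ∧ (c ≤ j ∧ j ≤ c + oc) then G i j else 0 := by
  have h1 : ∀ p : ℕ, ∑ q ∈ range (oc+1), G (c-p) (c+q)
      = (fun i => ∑ j ∈ range (r+1), if c ≤ j ∧ j ≤ c + oc then G i j else 0) (c-p) :=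
    fun p => sum_shift_up r c oc hoc (G (c-p))
  calc ∑ p ∈ range (tl+1), ∑ q ∈ range (oc+1), G (c-p) (c+q)
      = ∑ p ∈ range (tl+1), (fun i => ∑ j ∈ range (r+1),
          if c ≤ j ∧ j ≤ c + oc then G i j else 0) (c-p) :=
        Finset.sum_congr rfl (fun p _ => h1 p)
    _ = ∑ i ∈ range (r+1), if c - tl ≤ i ∧ i ≤ c then
          (∑ j ∈ range (r+1), if c ≤ j ∧ j ≤ c + oc then G i j else 0) else 0 :=
        sum_shift_down r c tl hc htl
          (fun i => ∑ j ∈ range (r+1), if c ≤ j ∧ j ≤ c + oc then G i j else 0)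
    _ = ∑ i ∈ range (r+1), ∑ j ∈ range (r+1),
          if (c - tl ≤ i ∧ i ≤ c) ∧ (c ≤ j ∧ j ≤ c + oc) then G i j else 0 := by
        refine Finset.sum_congr rfl (fun i _ => ?_)
        by_cases hA : c - tl ≤ i ∧ i ≤ c
        · rw [if_pos hA]
          refine Finset.sum_congr rfl (fun j _ => ?_)
          by_cases hB : c ≤ j ∧ j ≤ c + oc
          · rw [if_pos hB, if_pos ⟨hA, hB⟩]
          · rw [if_neg hB, if_neg (fun h => hB h.2)]
        · rw [if_neg hA]
          symm
          exact Finset.sum_eq_zero (fun j _ => if_neg (fun h => hA h.1))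

def Pcond (k : List ℕ) (i c j : ℕ) : Prop :=
  i ≤ c ∧ c ≤ j ∧ j ≤ k.length ∧ ∀ t ∈ Finset.Ico i j, k.getD t 0 = 1

instance (k : List ℕ) (i c j : ℕ) : Decidable (Pcond k i c j) := by
  unfold Pcond; infer_instance

noncomputable def Wterm (Zs : List ℕ → Polynomial ℝ) (k : List ℕ) (i c j : ℕ) :
    MvPolynomial (Fin 3) ℝ :=
  MvPolynomial.X 0 ^ (k.take i).sum * MvPolynomial.X 1 ^ (k.drop j).sum
  * MvPolynomial.X 2 ^ (j - i)
  * MvPolynomial.C ((Zs ((k.take i).reverse)).eval 0 * (((c-i).factorial : ℝ))⁻¹)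
  * MvPolynomial.C ((Zs (k.drop j)).eval 0 * (((j-c).factorial : ℝ))⁻¹)
  * MvPolynomial.X 0 ^ (c-i) * MvPolynomial.X 1 ^ (j-c)

section Final
variable (Zs : List ℕ → Polynomial ℝ)

lemma term_c_eq
    (hadm : ∀ k, IsIndex k → IsAdmissible k → Zs k = Polynomial.C (mzv k))
    (hone : Zs [1] = Polynomial.X)
    (hmul : ∀ k l, IsIndex k → IsIndex l → Zext Zs (harm k l) = Zs k * Zs l)
    (k : List ℕ) (hk : IsIndex k) (c : ℕ) (hc : c ≤ k.length) :
    MvPolynomial.X 0 ^ (k.take c).sum * MvPolynomial.X 1 ^ (k.drop c).sum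
      * Polynomial.aeval (MvPolynomial.X 2) (Zs (k.take c).reverse)
      * Polynomial.aeval (MvPolynomial.X 2) (Zs (k.drop c))
    = ∑ i ∈ range (k.length + 1), ∑ j ∈ range (k.length + 1),
        if Pcond k i c j then Wterm Zs k i c j else 0 := by
  have htlc : lead ((k.take c).reverse) ≤ c := lead_reverse_take_le k c hc
  have hocr : lead (k.drop c) ≤ k.length - c := lead_drop_le k c
  set r := k.length with hrdef
  set tl := lead ((k.take c).reverse) with htl
  set oc := lead (k.drop c) with hoc
  -- expansions
  have e1 : Polynomial.aeval (MvPolynomial.X 2 : MvPolynomial (Fin 3) ℝ) (Zs (k.take c).reverse)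
      = ∑ p ∈ range (tl + 1),
          MvPolynomial.C ((Zs ((k.take (c-p)).reverse)).eval 0 * ((p.factorial : ℝ))⁻¹)
            * MvPolynomial.X 2 ^ p := by
    rw [Qdrop Zs hadm hone hmul ((k.take c).reverse)
      (isIndex_reverse _ (isIndex_take k c hk)), map_sum]
    refine Finset.sum_congr rfl (fun p hp => ?_)
    have hple : p ≤ c := by
      simp only [Finset.mem_range] at hp; omega
    rw [rev_take_drop k c p hc hple, map_mul, map_pow, Polynomial.aeval_X,
      Polynomial.aeval_C, MvPolynomial.algebraMap_eq]
  have e2 : Polynomial.aeval (MvPolynomial.X 2 : MvPolynomial (Fin 3) ℝ) (Zs (k.drop c))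
      = ∑ q ∈ range (oc + 1),
          MvPolynomial.C ((Zs (k.drop (c+q))).eval 0 * ((q.factorial : ℝ))⁻¹)
            * MvPolynomial.X 2 ^ q := by
    rw [Qdrop Zs hadm hone hmul (k.drop c) (isIndex_drop k c hk), map_sum]
    refine Finset.sum_congr rfl (fun q hq => ?_)
    rw [List.drop_drop, map_mul, map_pow, Polynomial.aeval_X,
      Polynomial.aeval_C, MvPolynomial.algebraMap_eq]
  rw [e1, e2, mul_assoc, Finset.sum_mul_sum]
  simp only [Finset.mul_sum]
  have hstep : ∑ p ∈ range (tl + 1), ∑ q ∈ range (oc + 1),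
        (MvPolynomial.X 0 : MvPolynomial (Fin 3) ℝ) ^ (k.take c).sum * MvPolynomial.X 1 ^ (k.drop c).sum *
          ((MvPolynomial.C ((Zs ((k.take (c-p)).reverse)).eval 0 * ((p.factorial : ℝ))⁻¹)
              * MvPolynomial.X 2 ^ p)
            * (MvPolynomial.C ((Zs (k.drop (c+q))).eval 0 * ((q.factorial : ℝ))⁻¹)
              * MvPolynomial.X 2 ^ q))
      = ∑ p ∈ range (tl + 1), ∑ q ∈ range (oc + 1),
          (fun i j => (MvPolynomial.X 0 : MvPolynomial (Fin 3) ℝ) ^ (k.take c).sum * MvPolynomial.X 1 ^ (k.drop c).sum *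
            ((MvPolynomial.C ((Zs ((k.take i).reverse)).eval 0 * (((c-i).factorial : ℝ))⁻¹)
                * MvPolynomial.X 2 ^ (c-i))
              * (MvPolynomial.C ((Zs (k.drop j)).eval 0 * (((j-c).factorial : ℝ))⁻¹)
                * MvPolynomial.X 2 ^ (j-c)))) (c-p) (c+q) := by
    refine Finset.sum_congr rfl (fun p hp => Finset.sum_congr rfl (fun q hq => ?_))
    simp only [Finset.mem_range] at hp hq
    simp only
    rw [show c - (c-p) = p from by omega, show c + q - c = q from by omega]
  refine hstep.trans ?_
  refine Eq.trans (double_reindex r c tl oc hc htlc (by omega)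
    (fun i j => (MvPolynomial.X 0 : MvPolynomial (Fin 3) ℝ) ^ (k.take c).sum * MvPolynomial.X 1 ^ (k.drop c).sum *
      ((MvPolynomial.C ((Zs ((k.take i).reverse)).eval 0 * (((c-i).factorial : ℝ))⁻¹)
          * MvPolynomial.X 2 ^ (c-i))
        * (MvPolynomial.C ((Zs (k.drop j)).eval 0 * (((j-c).factorial : ℝ))⁻¹)
          * MvPolynomial.X 2 ^ (j-c))))) ?_
  -- now convert conditions
  refine Finset.sum_congr rfl (fun i hi => ?_)
  simp only [Finset.mem_range] at hi
  refine Finset.sum_congr rfl (fun j hj => ?_)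
  simp only [Finset.mem_range] at hj
  by_cases hAB : (c - tl ≤ i ∧ i ≤ c) ∧ (c ≤ j ∧ j ≤ c + oc)
  · obtain ⟨hA, hB⟩ := hAB
    have hpre := (prefix_cond k c i hc).mp ⟨hA.1, hA.2⟩
    have hsuf := (suffix_cond k c j hc).mp hB
    have hones : ∀ t ∈ Finset.Ico i j, k.getD t 0 = 1 := by
      intro t ht
      simp only [Finset.mem_Ico] at ht
      by_cases htc : t < c
      · exact hpre.2 t (by simp only [Finset.mem_Ico]; omega)
      · exact hsuf.2.2 t (by simp only [Finset.mem_Ico]; omega)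
    have hP : Pcond k i c j := ⟨hpre.1, hB.1, hsuf.2.1, hones⟩
    rw [if_pos ⟨hA, hB⟩, if_pos hP]
    unfold Wterm
    rw [sum_take_of_ones k i c hpre.1 hc hpre.2,
      sum_drop_of_ones k c j hB.1 hsuf.2.1 hsuf.2.2]
    rw [pow_add, pow_add, show j - i = (c - i) + (j - c) from by omega, pow_add]
    ring
  · rw [if_neg hAB]
    rw [if_neg (fun hP : Pcond k i c j => hAB ?_)]
    have hones_ic : ∀ t ∈ Finset.Ico i c, k.getD t 0 = 1 := fun t ht => hP.2.2.2 t (by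
      have hcj := hP.2.1
      simp only [Finset.mem_Ico] at ht ⊢; omega)
    have hones_cj : ∀ t ∈ Finset.Ico c j, k.getD t 0 = 1 := fun t ht => hP.2.2.2 t (by
      have hic := hP.1
      simp only [Finset.mem_Ico] at ht ⊢; omega)
    have h1 := (prefix_cond k c i hc).mpr ⟨hP.1, hones_ic⟩
    have h2 := (suffix_cond k c j hc).mpr ⟨hP.2.1, hP.2.2.1, hones_cj⟩
    exact ⟨⟨h1.1, h1.2⟩, h2⟩

lemma rhs_ij_eq (k : List ℕ) (i j : ℕ) (hi : i ≤ k.length) (hj : j ≤ k.length) :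
    (if i ≤ j ∧ ∀ t ∈ Finset.Ico i j, k.getD t 0 = 1 then
        MvPolynomial.X 0 ^ (k.take i).sum * MvPolynomial.X 1 ^ (k.drop j).sum
          * (((j - i).factorial : ℝ))⁻¹ •
              ((MvPolynomial.X 0 + MvPolynomial.X 1) * MvPolynomial.X 2) ^ (j - i)
          * MvPolynomial.C ((Zs (k.take i).reverse).eval 0)
          * MvPolynomial.C ((Zs (k.drop j)).eval 0)
      else 0)
    = ∑ c ∈ range (k.length + 1), if Pcond k i c j then Wterm Zs k i c j else 0 := by
  set r := k.length with hrdef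
  by_cases hcond : i ≤ j ∧ ∀ t ∈ Finset.Ico i j, k.getD t 0 = 1
  · rw [if_pos hcond]
    obtain ⟨hij, hones⟩ := hcond
    have hPiff : ∀ c, Pcond k i c j ↔ (i ≤ c ∧ c ≤ i + (j - i)) := by
      intro c
      unfold Pcond
      constructor
      · rintro ⟨h1, h2, _, _⟩; exact ⟨h1, by omega⟩
      · rintro ⟨h1, h2⟩; exact ⟨h1, by omega, hj, hones⟩
    have hsum : ∑ c ∈ range (r + 1), (if Pcond k i c j then Wterm Zs k i c j else 0)
        = ∑ c ∈ range (r + 1), (if i ≤ c ∧ c ≤ i + (j - i) then Wterm Zs k i c j else 0) :=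
      Finset.sum_congr rfl (fun c _ => if_congr (hPiff c) rfl rfl)
    rw [hsum, ← sum_shift_up r i (j - i) (by omega) (fun c => Wterm Zs k i c j)]
    rw [mul_pow, add_pow, MvPolynomial.smul_eq_C_mul]
    simp only [Finset.mul_sum, Finset.sum_mul]
    refine Finset.sum_congr rfl (fun m hm => ?_)
    simp only [Finset.mem_range] at hm
    unfold Wterm
    rw [show i + m - i = m from by omega, show j - (i + m) = (j - i) - m from by omega]
    have hcf := choose_fact_inv (j - i) m (by omega)
    have hC : ((((j-i).choose m : ℕ)) : MvPolynomial (Fin 3) ℝ)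
        = MvPolynomial.C (((j-i).choose m : ℝ)) := by
      rw [map_natCast (MvPolynomial.C : ℝ →+* MvPolynomial (Fin 3) ℝ)]
    rw [hC]
    rw [MvPolynomial.C_mul, MvPolynomial.C_mul]
    have hkey : (MvPolynomial.C ((((j-i).factorial : ℝ))⁻¹) : MvPolynomial (Fin 3) ℝ)
          * MvPolynomial.C (((j-i).choose m : ℝ))
        = MvPolynomial.C (((m.factorial : ℝ))⁻¹)
          * MvPolynomial.C (((((j-i)-m).factorial : ℝ))⁻¹) := by
      rw [← MvPolynomial.C_mul, ← MvPolynomial.C_mul, hcf]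
    linear_combination (MvPolynomial.X 0 ^ (List.take i k).sum
        * MvPolynomial.X 1 ^ (List.drop j k).sum
        * MvPolynomial.X 2 ^ (j-i)
        * MvPolynomial.C ((Zs (k.take i).reverse).eval 0)
        * MvPolynomial.C ((Zs (k.drop j)).eval 0)
        * MvPolynomial.X 0 ^ m * MvPolynomial.X 1 ^ ((j-i) - m)) * hkey
  · rw [if_neg hcond]
    symm
    refine Finset.sum_eq_zero (fun c _ => ?_)
    rw [if_neg (fun hP : Pcond k i c j => hcond ⟨by
        have := hP.1; have := hP.2.1; omega, hP.2.2.2⟩)]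

end Final

end Aux

/-- **Proposition 2.5, first identity (coefficientwise form).**
ζ*_{x,y}(k;T) = Σ_{0 ≤ i ≤ j ≤ r, k_{i+1} = ⋯ = k_j = 1}
x^{k₁+⋯+kᵢ} y^{k_{j+1}+⋯+k_r} ((x+y)T)^{j-i}/(j-i)! · Z*(kᵢ,…,k₁;0)·Z*(k_{j+1},…,k_r;0). -/
theorem zetaXY_harm_expansion
    (Zs : List ℕ → Polynomial ℝ)
    (hZs_adm : ∀ k, IsIndex k → IsAdmissible k → Zs k = Polynomial.C (mzv k))
    (hZs_one : Zs [1] = Polynomial.X)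
    (hZs_mul : ∀ k l, IsIndex k → IsIndex l → Zext Zs (harm k l) = Zs k * Zs l)
    (k : List ℕ) (hk : IsIndex k) :
    zetaXYpoly Zs k
      = ∑ i ∈ Finset.range (k.length + 1), ∑ j ∈ Finset.range (k.length + 1),
          if i ≤ j ∧ ∀ t ∈ Finset.Ico i j, k.getD t 0 = 1 then
            MvPolynomial.X 0 ^ (k.take i).sum * MvPolynomial.X 1 ^ (k.drop j).sum
              * ((j - i).factorial : ℝ)⁻¹ •
                  ((MvPolynomial.X 0 + MvPolynomial.X 1) * MvPolynomial.X 2) ^ (j - i)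
              * MvPolynomial.C ((Zs (k.take i).reverse).eval 0)
              * MvPolynomial.C ((Zs (k.drop j)).eval 0)
          else 0 := by
  unfold zetaXYpoly
  have step1 : ∑ c ∈ Finset.range (k.length + 1),
      MvPolynomial.X 0 ^ (k.take c).sum * MvPolynomial.X 1 ^ (k.drop c).sum
        * Polynomial.aeval (MvPolynomial.X 2) (Zs (k.take c).reverse)
        * Polynomial.aeval (MvPolynomial.X 2) (Zs (k.drop c))
      = ∑ c ∈ Finset.range (k.length + 1), ∑ i ∈ Finset.range (k.length + 1),
          ∑ j ∈ Finset.range (k.length + 1),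
          if Pcond k i c j then Wterm Zs k i c j else 0 :=
    Finset.sum_congr rfl (fun c hc => term_c_eq Zs hZs_adm hZs_one hZs_mul k hk c
      (by simp only [Finset.mem_range] at hc; omega))
  rw [step1]
  rw [Finset.sum_comm]
  have step2 : ∀ i, ∑ c ∈ Finset.range (k.length + 1), ∑ j ∈ Finset.range (k.length + 1),
        (if Pcond k i c j then Wterm Zs k i c j else 0)
      = ∑ j ∈ Finset.range (k.length + 1), ∑ c ∈ Finset.range (k.length + 1),
        (if Pcond k i c j then Wterm Zs k i c j else 0) := fun i => Finset.sum_comm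
  rw [Finset.sum_congr rfl (fun i _ => step2 i)]
  refine Finset.sum_congr rfl (fun i hi => Finset.sum_congr rfl (fun j hj => ?_))
  simp only [Finset.mem_range] at hi hj
  exact (rhs_ij_eq Zs k i j (by omega) (by omega)).symm
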